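/- The function h(x) = 1/(2^x − 1)² is convex on the interval (0, ∞). (This is the convexity in the number of quantization bits B of the per-user quantization error term δ²/(2^B − 1)², which underlies the convexity of the quantization error tolerance constraint C₃.) -/

import Mathlib

open Real Set

private noncomputable def qf1 (x : ℝ) : ℝ :=
  -(2 * ((2:ℝ) ^ x - 1) * ((2:ℝ) ^ x * Real.log 2)) / (((2:ℝ) ^ x - 1) ^ 2) ^ 2

private lemma two_rpow_gt_one {x : ℝ} (hx : 0 < x) : 1 < (2:ℝ) ^ x :=
  Real.one_lt_rpow_iff_of_pos (by norm_num) |>.2 (Or.inl ⟨by norm_num, hx⟩)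

private lemma hasDerivAt_base {x : ℝ} :
    HasDerivAt (fun x : ℝ => (2:ℝ) ^ x - 1) ((2:ℝ) ^ x * Real.log 2) x :=
  ((hasStrictDerivAt_const_rpow (by norm_num : (0:ℝ) < 2) x).hasDerivAt).sub_const 1

private lemma hasDerivAt_f {x : ℝ} (hx : 0 < x) :
    HasDerivAt (fun x : ℝ => 1 / ((2 : ℝ) ^ x - 1) ^ 2) (qf1 x) x := by
  have ht := two_rpow_gt_one hx
  have hne : ((2:ℝ) ^ x - 1) ^ 2 ≠ 0 := pow_ne_zero _ (by linarith)
  have h1 : HasDerivAt (fun x : ℝ => ((2:ℝ) ^ x - 1) ^ 2)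
      (2 * ((2:ℝ) ^ x - 1) * ((2:ℝ) ^ x * Real.log 2)) x := by
    have := hasDerivAt_base (x := x)
    simpa [mul_comm, mul_assoc, mul_left_comm] using this.fun_pow 2
  have := h1.fun_inv hne
  simpa [qf1, one_div, div_eq_mul_inv] using this

private lemma hasDerivAt_f1 {x : ℝ} (hx : 0 < x) :
    HasDerivAt qf1
      (-(2 * Real.log 2) *
        ((((2:ℝ) ^ x * Real.log 2) * ((2:ℝ) ^ x - 1) ^ 3 -
          (2:ℝ) ^ x * (3 * ((2:ℝ) ^ x - 1) ^ 2 * ((2:ℝ) ^ x * Real.log 2))) /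
          (((2:ℝ) ^ x - 1) ^ 3) ^ 2)) x := by
  have ht := two_rpow_gt_one hx
  have hne : ((2:ℝ) ^ x - 1) ^ 3 ≠ 0 := pow_ne_zero _ (by linarith)
  have hnum : HasDerivAt (fun x : ℝ => (2:ℝ) ^ x) ((2:ℝ) ^ x * Real.log 2) x :=
    (hasStrictDerivAt_const_rpow (by norm_num : (0:ℝ) < 2) x).hasDerivAt
  have hden : HasDerivAt (fun x : ℝ => ((2:ℝ) ^ x - 1) ^ 3)
      (3 * ((2:ℝ) ^ x - 1) ^ 2 * ((2:ℝ) ^ x * Real.log 2)) x := by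
    have := hasDerivAt_base (x := x)
    simpa [mul_comm, mul_assoc, mul_left_comm] using this.fun_pow 3
  have hq := hnum.div hden hne
  have hcomb := hq.const_mul (-(2 * Real.log 2))
  have heq : qf1 = fun x : ℝ => -(2 * Real.log 2) * ((2:ℝ) ^ x / ((2:ℝ) ^ x - 1) ^ 3) := by
    funext y
    simp only [qf1]
    by_cases h : ((2:ℝ) ^ y - 1) = 0
    · simp [h]
    · field_simp
  rw [heq]
  exact hcomb

theorem quantization_error_convex :
    ConvexOn ℝ (Set.Ioi (0 : ℝ)) (fun x : ℝ => 1 / ((2 : ℝ) ^ x - 1) ^ 2) := by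
  have hint : interior (Set.Ioi (0:ℝ)) = Set.Ioi 0 := interior_Ioi
  have hderiv : ∀ y ∈ Set.Ioi (0:ℝ),
      (deriv fun x : ℝ => 1 / ((2 : ℝ) ^ x - 1) ^ 2) y = qf1 y :=
    fun y hy => (hasDerivAt_f hy).deriv
  have hev : ∀ x ∈ Set.Ioi (0:ℝ),
      (deriv fun x : ℝ => 1 / ((2 : ℝ) ^ x - 1) ^ 2) =ᶠ[nhds x] qf1 := fun x hx =>
    Filter.eventuallyEq_of_mem (isOpen_Ioi.mem_nhds hx) hderiv
  apply convexOn_of_deriv2_nonneg (convex_Ioi 0)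
  · intro x hx
    exact (hasDerivAt_f hx).differentiableAt.continuousAt.continuousWithinAt
  · rw [hint]; intro x hx
    exact (hasDerivAt_f hx).differentiableAt.differentiableWithinAt
  · rw [hint]; intro x hx
    exact ((hasDerivAt_f1 hx).differentiableAt.congr_of_eventuallyEq
      (hev x hx)).differentiableWithinAt
  · rw [hint]; intro x hx
    have h2 : deriv^[2] (fun x : ℝ => 1 / ((2 : ℝ) ^ x - 1) ^ 2) x
        = deriv qf1 x := by
      simp only [Function.iterate_succ, Function.iterate_zero, Function.comp_apply, id]
      exact (hev x hx).deriv_eq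
    rw [h2, (hasDerivAt_f1 hx).deriv]
    have ht := two_rpow_gt_one hx
    have hL : 0 < Real.log 2 := Real.log_pos (by norm_num)
    set t := (2:ℝ) ^ x with hts
    have htp : 0 < t := by linarith
    have hrw : -(2 * Real.log 2) *
        ((t * Real.log 2 * (t - 1) ^ 3 - t * (3 * (t - 1) ^ 2 * (t * Real.log 2))) /
          ((t - 1) ^ 3) ^ 2)
        = (2 * Real.log 2 * (t * Real.log 2 * (t - 1) ^ 2 * (2 * t + 1))) / ((t - 1) ^ 3) ^ 2 := by
      have hne : t - 1 ≠ 0 := by linarith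
      field_simp
      ring
    rw [hrw]
    positivity
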